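/- Define ω(θ, ρ, p) := 3π/2 − arctan((ρ cos θ + p sin θ)/(ρ sin θ − p cos θ)) and the Lagrangian L(θ, ρ, p) := γ(ω(θ, ρ, p))·√(ρ² + p²), where γ : ℝ → ℝ is twice continuously differentiable. Let r : ℝ → ℝ be twice differentiable with r(θ) > 0 and r(θ) sin θ − r′(θ) cos θ ≠ 0 near θ₀. Then the Euler–Lagrange expression satisfies, at θ₀, (∂L/∂ρ)(θ, r(θ), r′(θ)) − d/dθ[(∂L/∂p)(θ, r(θ), r′(θ))] = r(θ)·(γ(Ω(θ)) + γ″(Ω(θ)))·κ(θ), where Ω(θ) := ω(θ, r(θ), r′(θ)) and κ(θ) := (2r′(θ)² − r(θ) r″(θ) + r(θ)²)/(r′(θ)² + r(θ)²)^{3/2}. -/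

import Mathlib

open Real Filter

/-- The surface orientation angle of the outward normal to a polar curve R = r(θ),
as a function of θ, ρ and p = dr/dθ. -/
noncomputable def orientationAngle (θ ρ p : ℝ) : ℝ :=
  3 * π / 2 -
    Real.arctan ((ρ * Real.cos θ + p * Real.sin θ) / (ρ * Real.sin θ - p * Real.cos θ))

/-- The surface-energy Lagrangian L(θ, ρ, p) = γ(ω(θ,ρ,p)) √(ρ² + p²). -/
noncomputable def surfaceLagrangian (γ : ℝ → ℝ) (θ ρ p : ℝ) : ℝ :=
  γ (orientationAngle θ ρ p) * Real.sqrt (ρ ^ 2 + p ^ 2)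

lemma hasDerivAt_arctan_div {N D : ℝ → ℝ} {N' D' x : ℝ}
    (hN : HasDerivAt N N' x) (hD : HasDerivAt D D' x) (h : D x ≠ 0) :
    HasDerivAt (fun x => Real.arctan (N x / D x))
      ((N' * D x - N x * D') / (N x ^ 2 + D x ^ 2)) x := by
  have hu := hN.div hD h
  have h2 := (Real.hasDerivAt_arctan (N x / D x)).comp x hu
  refine h2.congr_deriv ?_
  have hD2 : D x ^ 2 ≠ 0 := pow_ne_zero _ h
  have hden : N x ^ 2 + D x ^ 2 ≠ 0 := by positivity
  field_simp
  ring

lemma sq_norm (θ ρ p : ℝ) :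
    (ρ * Real.cos θ + p * Real.sin θ) ^ 2 + (ρ * Real.sin θ - p * Real.cos θ) ^ 2
      = ρ ^ 2 + p ^ 2 := by
  have h := Real.sin_sq_add_cos_sq θ
  linear_combination (ρ^2 + p^2) * h

lemma S_ne {θ ρ p : ℝ} (h : ρ * Real.sin θ - p * Real.cos θ ≠ 0) : ρ ^ 2 + p ^ 2 ≠ 0 := by
  intro h0
  apply h
  have hρ : ρ = 0 := by nlinarith [sq_nonneg ρ, sq_nonneg p]
  have hp : p = 0 := by nlinarith [sq_nonneg ρ, sq_nonneg p]
  simp [hρ, hp]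

lemma omega_rho (θ ρ p : ℝ) (h : ρ * Real.sin θ - p * Real.cos θ ≠ 0) :
    HasDerivAt (fun ρ => orientationAngle θ ρ p) (p / (ρ ^ 2 + p ^ 2)) ρ := by
  have hN : HasDerivAt (fun ρ : ℝ => ρ * Real.cos θ + p * Real.sin θ) (Real.cos θ) ρ := by
    simpa using ((hasDerivAt_id ρ).mul_const (Real.cos θ)).add_const (p * Real.sin θ)
  have hD : HasDerivAt (fun ρ : ℝ => ρ * Real.sin θ - p * Real.cos θ) (Real.sin θ) ρ := by
    simpa using ((hasDerivAt_id ρ).mul_const (Real.sin θ)).sub_const (p * Real.cos θ)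
  have ha := hasDerivAt_arctan_div hN hD h
  have := (hasDerivAt_const ρ (3 * π / 2)).sub ha
  refine this.congr_deriv ?_
  rw [sq_norm]
  have hs := Real.sin_sq_add_cos_sq θ
  have key : Real.cos θ * (ρ * Real.sin θ - p * Real.cos θ) - (ρ * Real.cos θ + p * Real.sin θ) * Real.sin θ = -p := by
    linear_combination (-p) * hs
  rw [key]
  ring

lemma omega_p (θ ρ p : ℝ) (h : ρ * Real.sin θ - p * Real.cos θ ≠ 0) :
    HasDerivAt (fun p => orientationAngle θ ρ p) (-ρ / (ρ ^ 2 + p ^ 2)) p := by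
  have hN : HasDerivAt (fun p : ℝ => ρ * Real.cos θ + p * Real.sin θ) (Real.sin θ) p := by
    simpa using (((hasDerivAt_id p).mul_const (Real.sin θ)).const_add (ρ * Real.cos θ))
  have hD : HasDerivAt (fun p : ℝ => ρ * Real.sin θ - p * Real.cos θ) (-Real.cos θ) p := by
    simpa using (((hasDerivAt_id p).mul_const (Real.cos θ)).const_sub (ρ * Real.sin θ)).neg |>.neg
  have ha := hasDerivAt_arctan_div hN hD h
  have := (hasDerivAt_const p (3 * π / 2)).sub ha
  refine this.congr_deriv ?_
  rw [sq_norm]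
  have hs := Real.sin_sq_add_cos_sq θ
  have key : Real.sin θ * (ρ * Real.sin θ - p * Real.cos θ) - (ρ * Real.cos θ + p * Real.sin θ) * -Real.cos θ = ρ := by
    linear_combination ρ * hs
  rw [key]
  ring

lemma omega_theta (r : ℝ → ℝ) (hr : Differentiable ℝ r) (hr' : Differentiable ℝ (deriv r))
    (θ : ℝ) (h : r θ * Real.sin θ - deriv r θ * Real.cos θ ≠ 0) :
    HasDerivAt (fun θ => orientationAngle θ (r θ) (deriv r θ))
      ((r θ ^ 2 + 2 * deriv r θ ^ 2 - r θ * deriv (deriv r) θ) / (r θ ^ 2 + deriv r θ ^ 2)) θ := by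
  have hrd : HasDerivAt r (deriv r θ) θ := (hr θ).hasDerivAt
  have hrd2 : HasDerivAt (deriv r) (deriv (deriv r) θ) θ := (hr' θ).hasDerivAt
  have hN : HasDerivAt (fun θ => r θ * Real.cos θ + deriv r θ * Real.sin θ)
      ((deriv r θ * Real.cos θ - r θ * Real.sin θ) +
        (deriv (deriv r) θ * Real.sin θ + deriv r θ * Real.cos θ)) θ := by
    have h1 := hrd.mul (Real.hasDerivAt_cos θ)
    have h2 := hrd2.mul (Real.hasDerivAt_sin θ)
    exact (h1.add h2).congr_deriv (by ring)
  have hD : HasDerivAt (fun θ => r θ * Real.sin θ - deriv r θ * Real.cos θ)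
      ((deriv r θ * Real.sin θ + r θ * Real.cos θ) -
        (deriv (deriv r) θ * Real.cos θ - deriv r θ * Real.sin θ)) θ := by
    have h1 := hrd.mul (Real.hasDerivAt_sin θ)
    have h2 := hrd2.mul (Real.hasDerivAt_cos θ)
    exact (h1.sub h2).congr_deriv (by ring)
  have ha := hasDerivAt_arctan_div hN hD h
  have := (hasDerivAt_const θ (3 * π / 2)).sub ha
  have heq : ∀ x : ℝ, 3 * π / 2 - Real.arctan ((r x * Real.cos x + deriv r x * Real.sin x) /
      (r x * Real.sin x - deriv r x * Real.cos x)) = orientationAngle x (r x) (deriv r x) := by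
    intro x; rfl
  refine this.congr_deriv ?_
  rw [sq_norm]
  have hs := Real.sin_sq_add_cos_sq θ
  set a := r θ; set b := deriv r θ; set c := deriv (deriv r) θ
  have key : ((b * Real.cos θ - a * Real.sin θ) + (c * Real.sin θ + b * Real.cos θ)) *
        (a * Real.sin θ - b * Real.cos θ)
      - (a * Real.cos θ + b * Real.sin θ) *
        ((b * Real.sin θ + a * Real.cos θ) - (c * Real.cos θ - b * Real.sin θ))
      = -(a ^ 2 + 2 * b ^ 2 - a * c) := by
    linear_combination (-(a^2 + 2*b^2 - a*c)) * hs
  rw [key]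
  ring

lemma L_rho (γ : ℝ → ℝ) (hγ : ContDiff ℝ 2 γ) (θ ρ p : ℝ)
    (h : ρ * Real.sin θ - p * Real.cos θ ≠ 0) :
    HasDerivAt (fun ρ => surfaceLagrangian γ θ ρ p)
      ((deriv γ (orientationAngle θ ρ p) * p + γ (orientationAngle θ ρ p) * ρ)
        / Real.sqrt (ρ ^ 2 + p ^ 2)) ρ := by
  have hS : (0:ℝ) < ρ ^ 2 + p ^ 2 := lt_of_le_of_ne (by positivity) (Ne.symm (S_ne h))
  have hsq : Real.sqrt (ρ ^ 2 + p ^ 2) ≠ 0 := by positivity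
  have hω := omega_rho θ ρ p h
  have hγd : HasDerivAt γ (deriv γ (orientationAngle θ ρ p)) (orientationAngle θ ρ p) :=
    (hγ.differentiable two_ne_zero (orientationAngle θ ρ p)).hasDerivAt
  have hγω := hγd.comp ρ hω
  have hin : HasDerivAt (fun ρ : ℝ => ρ ^ 2 + p ^ 2) (2 * ρ) ρ := by
    simpa using (hasDerivAt_pow 2 ρ).add_const (p ^ 2)
  have hsqrt := (Real.hasDerivAt_sqrt (ne_of_gt hS)).comp ρ hin
  have := hγω.mul hsqrt
  refine this.congr_deriv ?_
  simp only [Function.comp]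
  set s := Real.sqrt (ρ ^ 2 + p ^ 2) with hsdef
  have hs2 : s ^ 2 = ρ ^ 2 + p ^ 2 := Real.sq_sqrt (le_of_lt hS)
  rw [← hs2]
  field_simp

lemma L_p (γ : ℝ → ℝ) (hγ : ContDiff ℝ 2 γ) (θ ρ p : ℝ)
    (h : ρ * Real.sin θ - p * Real.cos θ ≠ 0) :
    HasDerivAt (fun p => surfaceLagrangian γ θ ρ p)
      ((γ (orientationAngle θ ρ p) * p - deriv γ (orientationAngle θ ρ p) * ρ)
        / Real.sqrt (ρ ^ 2 + p ^ 2)) p := by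
  have hS : (0:ℝ) < ρ ^ 2 + p ^ 2 := lt_of_le_of_ne (by positivity) (Ne.symm (S_ne h))
  have hsq : Real.sqrt (ρ ^ 2 + p ^ 2) ≠ 0 := by positivity
  have hω := omega_p θ ρ p h
  have hγd : HasDerivAt γ (deriv γ (orientationAngle θ ρ p)) (orientationAngle θ ρ p) :=
    (hγ.differentiable two_ne_zero (orientationAngle θ ρ p)).hasDerivAt
  have hγω := hγd.comp p hω
  have hin : HasDerivAt (fun p : ℝ => ρ ^ 2 + p ^ 2) (2 * p) p := by
    simpa using (hasDerivAt_pow 2 p).const_add (ρ ^ 2)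
  have hsqrt := (Real.hasDerivAt_sqrt (ne_of_gt hS)).comp p hin
  have := hγω.mul hsqrt
  refine this.congr_deriv ?_
  simp only [Function.comp]
  set s := Real.sqrt (ρ ^ 2 + p ^ 2) with hsdef
  have hs2 : s ^ 2 = ρ ^ 2 + p ^ 2 := Real.sq_sqrt (le_of_lt hS)
  rw [← hs2]
  field_simp
  ring

/-- the Euler–Lagrange expression of the surface energy reduces to
Herring's form: ∂L/∂ρ − d/dθ(∂L/∂p) = r (γ(Ω) + γ″(Ω)) κ, where
Ω(θ) = ω(θ, r(θ), r′(θ)) and κ = (2r′² − r r″ + r²)/(r′² + r²)^{3/2}. -/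
theorem stmt10 (γ : ℝ → ℝ) (hγ : ContDiff ℝ 2 γ)
    (r : ℝ → ℝ) (hr : Differentiable ℝ r) (hr' : Differentiable ℝ (deriv r))
    (θ₀ : ℝ) (hpos : ∀ᶠ θ in nhds θ₀, 0 < r θ)
    (hD : ∀ᶠ θ in nhds θ₀, r θ * Real.sin θ - deriv r θ * Real.cos θ ≠ 0) :
    deriv (fun ρ => surfaceLagrangian γ θ₀ ρ (deriv r θ₀)) (r θ₀)
      - deriv (fun θ => deriv (fun p => surfaceLagrangian γ θ (r θ) p) (deriv r θ)) θ₀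
    = r θ₀ *
        (γ (orientationAngle θ₀ (r θ₀) (deriv r θ₀)) +
          deriv (deriv γ) (orientationAngle θ₀ (r θ₀) (deriv r θ₀))) *
        ((2 * deriv r θ₀ ^ 2 - r θ₀ * deriv (deriv r) θ₀ + r θ₀ ^ 2) /
          (deriv r θ₀ ^ 2 + r θ₀ ^ 2) ^ ((3 : ℝ) / 2)) := by
  have hD0 : r θ₀ * Real.sin θ₀ - deriv r θ₀ * Real.cos θ₀ ≠ 0 := hD.self_of_nhds
  have hS0 : (0:ℝ) < r θ₀ ^ 2 + deriv r θ₀ ^ 2 :=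
    lt_of_le_of_ne (by positivity) (Ne.symm (S_ne hD0))
  have h1 := (L_rho γ hγ θ₀ (r θ₀) (deriv r θ₀) hD0).deriv
  have hEq : (fun θ => deriv (fun p => surfaceLagrangian γ θ (r θ) p) (deriv r θ)) =ᶠ[nhds θ₀]
      fun θ => (γ (orientationAngle θ (r θ) (deriv r θ)) * deriv r θ
        - deriv γ (orientationAngle θ (r θ) (deriv r θ)) * r θ)
          / Real.sqrt (r θ ^ 2 + deriv r θ ^ 2) := by
    filter_upwards [hD] with θ hθ
    exact (L_p γ hγ θ (r θ) (deriv r θ) hθ).deriv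
  rw [h1, hEq.deriv_eq]
  -- γ' is C¹
  have hγ1 : ContDiff ℝ 1 (deriv γ) := by
    have h11 : ContDiff ℝ (1 + 1) γ := hγ.of_le (by norm_num)
    exact (contDiff_succ_iff_deriv.mp h11).2.2
  -- derivative of the ∂L/∂p expression along the curve
  have hΩ := omega_theta r hr hr' θ₀ hD0
  set Ω₀ := orientationAngle θ₀ (r θ₀) (deriv r θ₀) with hΩ₀
  have ha : HasDerivAt r (deriv r θ₀) θ₀ := (hr θ₀).hasDerivAt
  have hb : HasDerivAt (deriv r) (deriv (deriv r) θ₀) θ₀ := (hr' θ₀).hasDerivAt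
  have hγcomp : HasDerivAt (fun θ => γ (orientationAngle θ (r θ) (deriv r θ)))
      (deriv γ Ω₀ * ((r θ₀ ^ 2 + 2 * deriv r θ₀ ^ 2 - r θ₀ * deriv (deriv r) θ₀)
        / (r θ₀ ^ 2 + deriv r θ₀ ^ 2))) θ₀ :=
    ((hγ.differentiable two_ne_zero Ω₀).hasDerivAt).comp θ₀ hΩ
  have hγ'comp : HasDerivAt (fun θ => deriv γ (orientationAngle θ (r θ) (deriv r θ)))
      (deriv (deriv γ) Ω₀ * ((r θ₀ ^ 2 + 2 * deriv r θ₀ ^ 2 - r θ₀ * deriv (deriv r) θ₀)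
        / (r θ₀ ^ 2 + deriv r θ₀ ^ 2))) θ₀ :=
    by
    have hdg : HasDerivAt (deriv γ) (deriv (deriv γ) Ω₀) Ω₀ :=
      (hγ1.differentiable (by norm_num) Ω₀).hasDerivAt
    have := hdg.comp θ₀ hΩ
    exact this
  have hnum := (hγcomp.mul hb).sub (hγ'comp.mul ha)
  have hin : HasDerivAt (fun θ => r θ ^ 2 + deriv r θ ^ 2)
      (2 * r θ₀ * deriv r θ₀ + 2 * deriv r θ₀ * deriv (deriv r) θ₀) θ₀ := by
    have h1 := ha.pow 2
    have h2 := hb.pow 2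
    refine (h1.add h2).congr_deriv ?_
    push_cast
    ring
  have hden0 := (Real.hasDerivAt_sqrt (ne_of_gt hS0)).comp θ₀ hin
  have hden : HasDerivAt (fun θ => Real.sqrt (r θ ^ 2 + deriv r θ ^ 2))
      (1 / (2 * Real.sqrt (r θ₀ ^ 2 + deriv r θ₀ ^ 2)) *
        (2 * r θ₀ * deriv r θ₀ + 2 * deriv r θ₀ * deriv (deriv r) θ₀)) θ₀ := hden0
  have hsne : Real.sqrt (r θ₀ ^ 2 + deriv r θ₀ ^ 2) ≠ 0 := by positivity
  have hF := hnum.div hden hsne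
  have hF' : HasDerivAt (fun θ => (γ (orientationAngle θ (r θ) (deriv r θ)) * deriv r θ
    - deriv γ (orientationAngle θ (r θ) (deriv r θ)) * r θ)
      / Real.sqrt (r θ ^ 2 + deriv r θ ^ 2)) _ θ₀ := hF
  rw [hF'.deriv]
  simp only [Pi.sub_apply, Pi.mul_apply]
  -- final algebra
  set a := r θ₀
  set b := deriv r θ₀
  set c := deriv (deriv r) θ₀
  set g := γ Ω₀
  set g1 := deriv γ Ω₀
  set g2 := deriv (deriv γ) Ω₀
  set s := Real.sqrt (a ^ 2 + b ^ 2) with hsdef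
  have hs2 : s ^ 2 = a ^ 2 + b ^ 2 := Real.sq_sqrt (le_of_lt hS0)
  have hs0 : s ≠ 0 := hsne
  have hr32 : ((b : ℝ) ^ 2 + a ^ 2) ^ ((3:ℝ)/2) = s ^ 3 := by
    rw [hsdef, show ((b:ℝ) ^ 2 + a ^ 2) = a ^ 2 + b ^ 2 by ring, Real.sqrt_eq_rpow,
      ← Real.rpow_natCast ((a ^ 2 + b ^ 2) ^ ((1:ℝ)/2)) 3, ← Real.rpow_mul (le_of_lt hS0)]
    norm_num
  rw [hr32]
  rw [← hs2]
  field_simp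
  linear_combination (2 * g1 * b + g * a - g * c) * hs2
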